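/- For every natural number n ≥ 1, the adjacency matrix A_n of G_n, regarded as a linear map on the real vector space ℝ^{V(G_n)} ≅ ℝ^{3^n}, has kernel of dimension exactly 3^{n−1}; equivalently, 0 is an eigenvalue of A_n with multiplicity 3^{n−1}, and the index Ind(M_n) = dim ker M_n − dim ker M_nᵀ of the hub-to-rim block M_n of A_n equals 3^{n−1}. -/

import Mathlib

namespace DSFN

/-- Vertex set of the `n`-th generation graph `G n` of the Barabási–Ravasz–Vicsek
deterministic scale-free network: `Fin n → Fin 3`, which is canonically
`{0,1,2} × V(G (n-1))` (first coordinate = which of the three copies). -/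
abbrev Vert (n : ℕ) : Type := Fin n → Fin 3

/-- The root of `G n`: the all-zero vertex. -/
def root (n : ℕ) : Vert n := fun _ => 0

/-- The leaf set of `G n`: recursively, leaves of `G n` are the vertices `(t, ℓ)` with
`t ∈ {1,2}` and `ℓ` a leaf of `G (n-1)`; equivalently all coordinates are nonzero. -/
def IsLeaf {n : ℕ} (v : Vert n) : Prop := ∀ i, v i ≠ 0

/-- The hub vertices of `G n`: the unique hub of `G 1` is the root `0`, and the hubs of
`G n` are the vertices `(t, h)` with `h` a hub of `G (n-1)`; equivalently the last
coordinate vanishes. All other vertices are rim vertices. -/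
def IsHub {n : ℕ} (v : Vert n) : Prop := ∀ i : Fin n, (i : ℕ) + 1 = n → v i = 0

/-- Adjacency in `G n` : each of the three copies of `G (n-1)` is an induced subgraph,
and in addition the root is joined to every vertex `(t, ℓ)` with `t ∈ {1,2}` and
`ℓ` a leaf of `G (n-1)`. -/
def Adj : (n : ℕ) → Vert n → Vert n → Prop
  | 0 => fun _ _ => False
  | n + 1 => fun u v =>
      (u 0 = v 0 ∧ Adj n (Fin.tail u) (Fin.tail v)) ∨
      (u = root (n + 1) ∧ (v 0 = 1 ∨ v 0 = 2) ∧ IsLeaf (Fin.tail v)) ∨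
      (v = root (n + 1) ∧ (u 0 = 1 ∨ u 0 = 2) ∧ IsLeaf (Fin.tail u))

instance instDecIsLeaf {n : ℕ} : DecidablePred (IsLeaf (n := n)) := fun v =>
  inferInstanceAs (Decidable (∀ i, v i ≠ 0))

instance instDecIsHub {n : ℕ} : DecidablePred (IsHub (n := n)) := fun v =>
  inferInstanceAs (Decidable (∀ i : Fin n, (i : ℕ) + 1 = n → v i = 0))

instance instDecAdj : (n : ℕ) → DecidableRel (Adj n)
  | 0 => fun _ _ => inferInstanceAs (Decidable False)
  | n + 1 => fun u v =>
      letI := instDecAdj n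
      inferInstanceAs (Decidable
        ((u 0 = v 0 ∧ Adj n (Fin.tail u) (Fin.tail v)) ∨
        (u = root (n + 1) ∧ (v 0 = 1 ∨ v 0 = 2) ∧ IsLeaf (Fin.tail v)) ∨
        (v = root (n + 1) ∧ (u 0 = 1 ∨ u 0 = 2) ∧ IsLeaf (Fin.tail u))))

theorem adj_symm : ∀ (n : ℕ) (u v : Vert n), Adj n u v → Adj n v u
  | 0, _, _, h => h.elim
  | n + 1, _, _, h =>
      h.elim (fun h1 => Or.inl ⟨h1.1.symm, adj_symm n _ _ h1.2⟩)
        (fun h2 => h2.elim (fun a => Or.inr (Or.inr a)) (fun a => Or.inr (Or.inl a)))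

theorem adj_irrefl : (n : ℕ) → ∀ v : Vert n, ¬ Adj n v v
  | 0 => fun _ h => h
  | n + 1 => by
      intro v h
      rcases h with ⟨-, h2⟩ | ⟨h1, h2, -⟩ | ⟨h1, h2, -⟩
      · exact adj_irrefl n (Fin.tail v) h2
      · rw [h1] at h2
        exact h2.elim (fun c => absurd c (by simp [root])) (fun c => absurd c (by simp [root]))
      · rw [h1] at h2
        exact h2.elim (fun c => absurd c (by simp [root])) (fun c => absurd c (by simp [root]))

/-- The `n`-th generation of the Barabási–Ravasz–Vicsek deterministic scale-free
network, as a simple graph (for `n ≥ 1`; `G 0` is the trivial one-vertex graph). -/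
def G (n : ℕ) : SimpleGraph (Vert n) where
  Adj := Adj n
  symm := ⟨fun u v h => adj_symm n u v h⟩
  loopless := ⟨fun v h => adj_irrefl n v h⟩

instance (n : ℕ) : DecidableRel (G n).Adj := instDecAdj n

end DSFN

namespace DSFN

/-- The hub-to-rim block of the adjacency matrix of `G n`: its rows are indexed by the
hub vertices, its columns by the rim vertices, and its `(h, r)` entry is `1` iff `h`
and `r` are adjacent in `G n`.  After reordering the vertices by the hub/rim
bipartition, the adjacency matrix of `G n` has the block form
`[[0, Mblock n], [(Mblock n)ᵀ, 0]]`. -/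
def Mblock (n : ℕ) :
    Matrix {v : Vert n // IsHub v} {v : Vert n // ¬ IsHub v} ℝ :=
  fun h r => if (G n).Adj h.1 r.1 then 1 else 0

lemma isHub_iff {n : ℕ} (v : Vert (n + 1)) : IsHub v ↔ v (Fin.last n) = 0 := by
  constructor
  · intro h; exact h (Fin.last n) (by simp)
  · intro h i hi
    have : i = Fin.last n := Fin.ext (by simpa using Nat.succ_injective hi)
    rwa [this]

lemma isHub_cons {n : ℕ} (t : Fin 3) (w : Vert (n + 1)) :
    IsHub (Fin.cons t w : Vert (n + 2)) ↔ IsHub w := by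
  rw [isHub_iff, isHub_iff, ← Fin.succ_last, Fin.cons_succ]

lemma isHub_root (n : ℕ) : IsHub (root n) := fun _ _ => rfl

lemma root_cons (n : ℕ) : (root (n + 1) : Vert (n + 1)) = Fin.cons 0 (root n) := by
  funext i
  refine Fin.cases ?_ ?_ i <;> simp [root]

lemma bipartite : ∀ n (u v : Vert n), Adj n u v → (IsHub u ↔ ¬ IsHub v)
  | 0, _, _, h => h.elim
  | 1, u, v, h => by
      rcases h with ⟨-, h2⟩ | ⟨h1, h2, -⟩ | ⟨h1, h2, -⟩
      · exact h2.elim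
      · subst h1
        have hv : ¬ IsHub v := by
          rw [isHub_iff]
          intro hv
          rcases h2 with h | h <;> rw [show (0 : Fin 1) = Fin.last 0 from rfl, hv] at h <;>
            exact absurd h (by decide)
        simp [hv, isHub_root]
      · subst h1
        have hu : ¬ IsHub u := by
          rw [isHub_iff]
          intro hu
          rcases h2 with h | h <;> rw [show (0 : Fin 1) = Fin.last 0 from rfl, hu] at h <;>
            exact absurd h (by decide)
        simp [hu, isHub_root]
  | n + 2, u, v, h => by
      rcases h with ⟨-, h2⟩ | ⟨h1, h2, h3⟩ | ⟨h1, h2, h3⟩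
      · have ih := bipartite (n + 1) _ _ h2
        rw [← Fin.cons_self_tail u, ← Fin.cons_self_tail v, isHub_cons, isHub_cons]
        exact ih
      · subst h1
        have hv : ¬ IsHub v := by
          rw [isHub_iff, ← Fin.succ_last]
          exact h3 (Fin.last n)
        simp [hv, isHub_root]
      · subst h1
        have hu : ¬ IsHub u := by
          rw [isHub_iff, ← Fin.succ_last]
          exact h3 (Fin.last n)
        simp [hu, isHub_root]

lemma sum_split {α : Type*} [Fintype α] (p : α → Prop) [DecidablePred p]
    {β : Type*} [AddCommMonoid β] (f : α → β) :
    ∑ x : α, f x = (∑ x : {a // p a}, f x.1) + ∑ x : {a // ¬ p a}, f x.1 := by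
  rw [← Finset.sum_filter_add_sum_filter_not Finset.univ p f]
  congr 1
  · exact Finset.sum_subtype _ (by simp) f
  · exact Finset.sum_subtype _ (by simp) f

lemma sum_cons {β : Type*} [AddCommMonoid β] {k : ℕ} (f : Vert (k + 1) → β) :
    ∑ u : Vert (k + 1), f u = ∑ t : Fin 3, ∑ w : Vert k, f (Fin.cons t w) := by
  rw [← (Fin.consEquiv (fun _ => Fin 3)).sum_comp f, Fintype.sum_prod_type]
  rfl

lemma hubZero (m : ℕ) : ∀ (y : Vert (m + 1) → ℝ),
    (∀ v, ¬ IsHub v → y v = 0) →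
    (∀ r : Vert (m + 1), ¬ IsHub r → ∑ u, (if Adj (m + 1) u r then y u else 0) = 0) →
    ∀ v, y v = 0 := by
  induction m with
  | zero =>
    intro y hsupp heq
    have hr : ¬ IsHub (fun _ => (1 : Fin 3) : Vert 1) := by
      rw [isHub_iff]; decide
    have hadj : ∀ u : Vert 1, Adj 1 u (fun _ => (1 : Fin 3)) ↔ u = root 1 := by
      intro u
      constructor
      · rintro (⟨-, h⟩ | ⟨h1, -, -⟩ | ⟨h1, -, -⟩)
        · exact h.elim
        · exact h1
        · exact absurd (congrFun h1 0) (by decide)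
      · rintro rfl
        exact Or.inr (Or.inl ⟨rfl, Or.inl rfl, fun i => i.elim0⟩)
    have hroot : y (root 1) = 0 := by
      have := heq _ hr
      calc y (root 1) = ∑ u : Vert 1, (if u = root 1 then y u else 0) := by
            rw [Finset.sum_ite_eq' Finset.univ (root 1) y]; simp
        _ = ∑ u : Vert 1, (if Adj 1 u (fun _ => (1 : Fin 3)) then y u else 0) := by
            exact Finset.sum_congr rfl fun u _ => by rw [if_congr (hadj u) rfl rfl]
        _ = 0 := this
    intro v
    by_cases hv : IsHub v
    · have : v = root 1 := funext fun i => by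
        rw [Fin.fin_one_eq_zero i]; exact hv 0 rfl
      rw [this]; exact hroot
    · exact hsupp v hv
  | succ m ih =>
    intro y hsupp heq
    have hadj : ∀ (t s : Fin 3) (u' w : Vert (m + 1)), ¬ IsHub w →
        (Adj (m + 2) (Fin.cons s u') (Fin.cons t w) ↔
          ((s = t ∧ Adj (m + 1) u' w) ∨
           (s = 0 ∧ u' = root (m + 1) ∧ (t = 1 ∨ t = 2) ∧ IsLeaf w))) := by
      intro t s u' w hw
      constructor
      · rintro (⟨h1, h2⟩ | ⟨h1, h2, h3⟩ | ⟨h1, -, -⟩)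
        · left
          exact ⟨by simpa using h1, by simpa [Fin.tail_cons] using h2⟩
        · right
          rw [root_cons, Fin.cons_inj] at h1
          exact ⟨h1.1, h1.2, by simpa using h2, by simpa [Fin.tail_cons] using h3⟩
        · exfalso
          rw [root_cons, Fin.cons_inj] at h1
          exact hw (h1.2 ▸ isHub_root (m + 1))
      · rintro (⟨rfl, h⟩ | ⟨rfl, rfl, h2, h3⟩)
        · exact Or.inl ⟨rfl, by simpa [Fin.tail_cons] using h⟩
        · refine Or.inr (Or.inl ⟨?_, ?_, ?_⟩)
          · exact (root_cons (m + 1)).symm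
          · simpa using h2
          · simpa [Fin.tail_cons] using h3
    have key : ∀ (t : Fin 3) (w : Vert (m + 1)), ¬ IsHub w →
        (t = 0 ∨ y (Fin.cons 0 (root (m + 1))) = 0) →
        ∑ u' : Vert (m + 1), (if Adj (m + 1) u' w then y (Fin.cons t u') else 0) = 0 := by
      intro t w hw hroot
      have point : ∀ s u', (if Adj (m + 2) (Fin.cons s u') (Fin.cons t w)
            then y (Fin.cons s u') else 0)
          = if s = t ∧ Adj (m + 1) u' w then y (Fin.cons s u') else 0 := by
        intro s u'
        by_cases hx : s = 0 ∧ u' = root (m + 1) ∧ (t = 1 ∨ t = 2) ∧ IsLeaf w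
        · obtain ⟨rfl, rfl, ht, -⟩ := hx
          have hy0 : y (Fin.cons 0 (root (m + 1))) = 0 := by
            rcases hroot with rfl | h
            · rcases ht with h | h <;> exact absurd h (by decide)
            · exact h
          rw [hy0]; simp
        · simp only [hadj t s u' w hw, hx, or_false]
      have hq := heq (Fin.cons t w) (fun h => hw ((isHub_cons t w).mp h))
      rw [sum_cons] at hq
      simp only [point, ite_and, Finset.sum_ite_irrel, Finset.sum_const_zero,
        Finset.sum_ite_eq', Finset.mem_univ, if_true] at hq
      exact hq
    have h0 : ∀ w, y (Fin.cons 0 w) = 0 :=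
      ih (fun w => y (Fin.cons 0 w)) (fun w hw => hsupp _ (fun h => hw ((isHub_cons 0 w).mp h)))
        (fun w hw => key 0 w hw (Or.inl rfl))
    have ht : ∀ (t : Fin 3) (w : Vert (m + 1)), y (Fin.cons t w) = 0 := fun t =>
      ih (fun w => y (Fin.cons t w)) (fun w hw => hsupp _ (fun h => hw ((isHub_cons t w).mp h)))
        (fun w hw => key t w hw (Or.inr (h0 _)))
    intro v
    rw [← Fin.cons_self_tail v]
    exact ht (v 0) (Fin.tail v)

lemma adj_mulVec {n : ℕ} (x : Vert n → ℝ) (v : Vert n) :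
    (((G n).adjMatrix ℝ).mulVec x) v = ∑ u, (if Adj n v u then x u else 0) := by
  simp only [Matrix.mulVec, dotProduct, SimpleGraph.adjMatrix_apply, ite_mul, one_mul,
    zero_mul]
  rfl

lemma ker_hub_zero {m : ℕ} (x : Vert (m + 1) → ℝ)
    (hx : ((G (m + 1)).adjMatrix ℝ).mulVec x = 0) :
    ∀ v, IsHub v → x v = 0 := by
  have h := hubZero m (fun v => if IsHub v then x v else 0)
    (fun v hv => by simp [hv]) ?_
  · intro v hv
    have := h v
    simpa [hv] using this
  · intro r hr
    have hxr : ∑ u, (if Adj (m + 1) r u then x u else 0) = 0 := by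
      rw [← adj_mulVec, hx]; rfl
    calc ∑ u, (if Adj (m + 1) u r then (if IsHub u then x u else 0) else 0)
        = ∑ u, (if Adj (m + 1) r u then x u else 0) := by
          apply Finset.sum_congr rfl; intro u _
          by_cases ha : Adj (m + 1) u r
          · have ha' : Adj (m + 1) r u := adj_symm _ _ _ ha
            have hub : IsHub u := (bipartite (m + 1) u r ha).mpr hr
            simp [ha, ha', hub]
          · have ha' : ¬ Adj (m + 1) r u := fun h' => ha (adj_symm _ _ _ h')
            simp [ha, ha']
      _ = 0 := hxr

lemma kerMT (m : ℕ) : LinearMap.ker (Matrix.toLin' ((Mblock (m + 1)).transpose)) = ⊥ := by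
  rw [LinearMap.ker_eq_bot']
  intro z hz
  rw [Matrix.toLin'_apply] at hz
  have hall := hubZero m (fun v => if h : IsHub v then z ⟨v, h⟩ else 0)
    (fun v hv => by simp [hv]) ?_
  · funext h
    have := hall h.1
    simpa [h.2] using this
  · intro r hr
    rw [sum_split IsHub]
    have h2 : ∑ u : {v : Vert (m + 1) // ¬ IsHub v},
        (if Adj (m + 1) u.1 r then (if h : IsHub u.1 then z ⟨u.1, h⟩ else 0) else 0) = 0 := by
      apply Finset.sum_eq_zero; intro u _
      simp [u.2]
    rw [h2, add_zero]
    have hzr := congrFun hz (⟨r, hr⟩ : {v : Vert (m + 1) // ¬ IsHub v})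
    have hGadj : ∀ u v : Vert (m + 1), (G (m + 1)).Adj u v ↔ Adj (m + 1) u v :=
      fun _ _ => Iff.rfl
    simp only [Matrix.mulVec, dotProduct, Matrix.transpose_apply, Mblock, ite_mul, one_mul,
      zero_mul, Pi.zero_apply, hGadj] at hzr
    calc (∑ u : {v : Vert (m + 1) // IsHub v},
          if Adj (m + 1) u.1 r then (if h : IsHub u.1 then z ⟨u.1, h⟩ else 0) else 0)
        = ∑ u : {v : Vert (m + 1) // IsHub v}, (if Adj (m + 1) u.1 r then z u else 0) := by
          apply Finset.sum_congr rfl; intro u _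
          by_cases ha : Adj (m + 1) u.1 r <;> simp [ha, u.2]
      _ = 0 := hzr

def hubEquiv (m : ℕ) : {v : Vert (m + 1) // IsHub v} ≃ Vert m where
  toFun v := Fin.init v.1
  invFun w := ⟨Fin.snoc w 0, (isHub_iff _).mpr (by simp)⟩
  left_inv v := Subtype.ext (by
    have h := (isHub_iff v.1).mp v.2
    conv_rhs => rw [← Fin.snoc_init_self v.1]
    rw [h])
  right_inv w := by simp

lemma card_hub (m : ℕ) : Fintype.card {v : Vert (m + 1) // IsHub v} = 3 ^ m := by
  rw [Fintype.card_congr (hubEquiv m)]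
  simp [Fintype.card_fun]

lemma card_rim (m : ℕ) : Fintype.card {v : Vert (m + 1) // ¬ IsHub v} = 2 * 3 ^ m := by
  rw [Fintype.card_subtype_compl, card_hub]
  have : Fintype.card (Vert (m + 1)) = 3 ^ (m + 1) := by simp [Fintype.card_fun]
  rw [this]
  ring_nf
  omega

lemma G_adj_iff {n : ℕ} (u v : Vert n) : (G n).Adj u v ↔ Adj n u v := Iff.rfl

lemma memkerM {m : ℕ} (x : Vert (m + 1) → ℝ)
    (hx : ((G (m + 1)).adjMatrix ℝ).mulVec x = 0) :
    (Mblock (m + 1)).mulVec (fun r => x r.1) = 0 := by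
  funext h
  show _ = (0 : ℝ)
  have hxv : ∑ u, (if Adj (m + 1) h.1 u then x u else 0) = 0 := by
    rw [← adj_mulVec, hx]; rfl
  rw [sum_split IsHub] at hxv
  have hhub : ∑ u : {v : Vert (m + 1) // IsHub v},
      (if Adj (m + 1) h.1 u.1 then x u.1 else 0) = 0 := by
    apply Finset.sum_eq_zero; intro u _
    rw [if_neg]
    intro ha
    exact ((bipartite (m + 1) _ _ ha).mp h.2) u.2
  rw [hhub, zero_add] at hxv
  simp only [Matrix.mulVec, dotProduct, Mblock, ite_mul, one_mul, zero_mul, G_adj_iff]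
  exact hxv

lemma memkerA {m : ℕ} (z : {v : Vert (m + 1) // ¬ IsHub v} → ℝ)
    (hz : (Mblock (m + 1)).mulVec z = 0) :
    ((G (m + 1)).adjMatrix ℝ).mulVec (fun v => if h : IsHub v then 0 else z ⟨v, h⟩) = 0 := by
  funext v
  show _ = (0 : ℝ)
  rw [adj_mulVec]
  by_cases hv : IsHub v
  · rw [sum_split IsHub]
    have hhub : ∑ u : {w : Vert (m + 1) // IsHub w},
        (if Adj (m + 1) v u.1 then (if h : IsHub u.1 then 0 else z ⟨u.1, h⟩) else 0) = 0 := by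
      apply Finset.sum_eq_zero; intro u _; simp [u.2]
    rw [hhub, zero_add]
    have hzv := congrFun hz ⟨v, hv⟩
    simp only [Matrix.mulVec, dotProduct, Mblock, ite_mul, one_mul, zero_mul,
      Pi.zero_apply, G_adj_iff] at hzv
    calc ∑ u : {w : Vert (m + 1) // ¬ IsHub w},
          (if Adj (m + 1) v u.1 then (if h : IsHub u.1 then 0 else z ⟨u.1, h⟩) else 0)
        = ∑ u : {w : Vert (m + 1) // ¬ IsHub w}, (if Adj (m + 1) v u.1 then z u else 0) := by
          apply Finset.sum_congr rfl; intro u _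
          by_cases ha : Adj (m + 1) v u.1 <;> simp [ha, u.2]
      _ = 0 := hzv
  · apply Finset.sum_eq_zero; intro u _
    by_cases ha : Adj (m + 1) v u
    · have hu : IsHub u := by
        by_contra hnu
        exact hv ((bipartite (m + 1) v u ha).mpr hnu)
      simp [ha, hu]
    · simp [ha]

noncomputable def kerEquiv (m : ℕ) :
    LinearMap.ker (Matrix.toLin' ((G (m + 1)).adjMatrix ℝ)) ≃ₗ[ℝ]
    LinearMap.ker (Matrix.toLin' (Mblock (m + 1))) where
  toFun x := ⟨fun r => x.1 r.1, by
    rw [LinearMap.mem_ker, Matrix.toLin'_apply]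
    refine memkerM x.1 ?_
    have := x.2
    rwa [LinearMap.mem_ker, Matrix.toLin'_apply] at this⟩
  invFun z := ⟨fun v => if h : IsHub v then 0 else z.1 ⟨v, h⟩, by
    rw [LinearMap.mem_ker, Matrix.toLin'_apply]
    refine memkerA z.1 ?_
    have := z.2
    rwa [LinearMap.mem_ker, Matrix.toLin'_apply] at this⟩
  map_add' x y := rfl
  map_smul' c x := rfl
  left_inv x := by
    apply Subtype.ext
    funext v
    by_cases hv : IsHub v
    · have hx0 : x.1 v = 0 := by
        have hm := x.2
        rw [LinearMap.mem_ker, Matrix.toLin'_apply] at hm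
        exact ker_hub_zero x.1 hm v hv
      simp [hv, hx0]
    · simp [hv]
  right_inv z := by
    apply Subtype.ext
    funext r
    simp [r.2]

theorem dsfn_zero_modes_and_index' (n : ℕ) (hn : 1 ≤ n) :
    Module.finrank ℝ (LinearMap.ker (Matrix.toLin' ((G n).adjMatrix ℝ))) = 3 ^ (n - 1) ∧
    Module.finrank ℝ (LinearMap.ker (Matrix.toLin' (Mblock n))) -
      Module.finrank ℝ (LinearMap.ker (Matrix.toLin' ((Mblock n).transpose))) = 3 ^ (n - 1) := by
  obtain ⟨m, rfl⟩ : ∃ m, n = m + 1 := ⟨n - 1, by omega⟩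
  have hkT : Module.finrank ℝ
      (LinearMap.ker (Matrix.toLin' ((Mblock (m + 1)).transpose))) = 0 := by
    rw [kerMT]; exact finrank_bot ℝ _
  have e1 : Matrix.toLin' (Mblock (m + 1)) = (Mblock (m + 1)).mulVecLin :=
    LinearMap.ext fun v => by rw [Matrix.toLin'_apply, Matrix.mulVecLin_apply]
  have e2 : Matrix.toLin' ((Mblock (m + 1)).transpose)
      = ((Mblock (m + 1)).transpose).mulVecLin :=
    LinearMap.ext fun v => by rw [Matrix.toLin'_apply, Matrix.mulVecLin_apply]
  have rn1 := LinearMap.finrank_range_add_finrank_ker (Matrix.toLin' (Mblock (m + 1)))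
  have rn2 := LinearMap.finrank_range_add_finrank_ker
    (Matrix.toLin' ((Mblock (m + 1)).transpose))
  rw [Module.finrank_fintype_fun_eq_card, card_rim] at rn1
  rw [Module.finrank_fintype_fun_eq_card, card_hub] at rn2
  have hrank1 : Module.finrank ℝ (LinearMap.range (Matrix.toLin' (Mblock (m + 1))))
      = (Mblock (m + 1)).rank := by rw [e1]; rfl
  have hrank2 : Module.finrank ℝ
      (LinearMap.range (Matrix.toLin' ((Mblock (m + 1)).transpose)))
      = ((Mblock (m + 1)).transpose).rank := by rw [e2]; rfl
  have htr : ((Mblock (m + 1)).transpose).rank = (Mblock (m + 1)).rank :=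
    Matrix.rank_transpose _
  rw [hrank1] at rn1
  rw [hrank2, htr, hkT] at rn2
  have hkM : Module.finrank ℝ (LinearMap.ker (Matrix.toLin' (Mblock (m + 1)))) = 3 ^ m := by
    omega
  have hkA : Module.finrank ℝ
      (LinearMap.ker (Matrix.toLin' ((G (m + 1)).adjMatrix ℝ))) = 3 ^ m := by
    rw [(kerEquiv m).finrank_eq, hkM]
  refine ⟨by simpa using hkA, by simp [hkM, hkT]⟩

/-- For every `n ≥ 1`, the adjacency matrix `A n` of `G n`, regarded
as a linear map on `ℝ^{V (G n)} ≅ ℝ^{3 ^ n}`, has kernel of dimension exactly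
`3 ^ (n-1)`; equivalently, `0` is an eigenvalue of `A n` with multiplicity `3 ^ (n-1)`,
and the index `Ind (M n) = dim ker (M n) - dim ker (M n)ᵀ` of the hub/rim block
of `A n` equals `3 ^ (n-1)`. -/
theorem dsfn_zero_modes_and_index (n : ℕ) (hn : 1 ≤ n) :
    Module.finrank ℝ (LinearMap.ker (Matrix.toLin' ((G n).adjMatrix ℝ))) = 3 ^ (n - 1) ∧
    Module.finrank ℝ (LinearMap.ker (Matrix.toLin' (Mblock n))) -
      Module.finrank ℝ (LinearMap.ker (Matrix.toLin' ((Mblock n).transpose))) = 3 ^ (n - 1) := by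
  exact dsfn_zero_modes_and_index' n hn

end DSFN
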